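/- Let Δt > 0, H ≥ 0, and let (aₙ), (bₙ), (cₙ), (dₙ) be sequences of non-negative real numbers such that for all integers l ≥ 0, a_l + Δt·Σ_{n=0}^{l} bₙ ≤ Δt·Σ_{n=0}^{l-1} dₙ·aₙ + Δt·Σ_{n=0}^{l} cₙ + H. Then for all l ≥ 0, a_l + Δt·Σ_{n=0}^{l} bₙ ≤ exp(Δt·Σ_{n=0}^{l-1} dₙ)·(Δt·Σ_{n=0}^{l} cₙ + H). -/

import Mathlib

namespace DiscreteGronwallPaper

lemma gronwall_aux (x : ℕ → ℝ) (hx : ∀ n, 0 ≤ x n) (l : ℕ) :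
    1 + ∑ n ∈ Finset.range l, x n * Real.exp (∑ k ∈ Finset.range n, x k) ≤
      Real.exp (∑ n ∈ Finset.range l, x n) := by
  induction l with
  | zero => simp
  | succ l ih =>
    rw [Finset.sum_range_succ, Finset.sum_range_succ, Real.exp_add, ← add_assoc]
    have hS : (0:ℝ) < Real.exp (∑ k ∈ Finset.range l, x k) := Real.exp_pos _
    have h1 : x l * Real.exp (∑ k ∈ Finset.range l, x k) ≤
        Real.exp (∑ k ∈ Finset.range l, x k) * (Real.exp (x l) - 1) := by
      rw [mul_comm]
      apply mul_le_mul_of_nonneg_left _ hS.le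
      linarith [Real.add_one_le_exp (x l)]
    nlinarith [Real.exp_pos (∑ k ∈ Finset.range l, x k)]

/-- Discrete Gronwall lemma without time step restriction. -/
theorem discrete_gronwall (Δt H : ℝ) (hΔt : 0 < Δt) (hH : 0 ≤ H)
    (a b c d : ℕ → ℝ)
    (ha : ∀ n, 0 ≤ a n) (hb : ∀ n, 0 ≤ b n) (hc : ∀ n, 0 ≤ c n) (hd : ∀ n, 0 ≤ d n)
    (hyp : ∀ l, a l + Δt * ∑ n ∈ Finset.range (l+1), b n ≤
      Δt * ∑ n ∈ Finset.range l, d n * a n + Δt * ∑ n ∈ Finset.range (l+1), c n + H) :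
    ∀ l, a l + Δt * ∑ n ∈ Finset.range (l+1), b n ≤
      Real.exp (Δt * ∑ n ∈ Finset.range l, d n) *
        (Δt * ∑ n ∈ Finset.range (l+1), c n + H) := by
  intro l
  induction l using Nat.strong_induction_on with
  | _ l ih =>
  have hCnn : ∀ m : ℕ, 0 ≤ Δt * ∑ n ∈ Finset.range (m+1), c n + H := fun m => by
    have : 0 ≤ ∑ n ∈ Finset.range (m+1), c n := Finset.sum_nonneg fun n _ => hc n
    positivity
  have hCmono : ∀ m : ℕ, m ≤ l → Δt * ∑ n ∈ Finset.range (m+1), c n + H ≤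
      Δt * ∑ n ∈ Finset.range (l+1), c n + H := by
    intro m hm
    have : ∑ n ∈ Finset.range (m+1), c n ≤ ∑ n ∈ Finset.range (l+1), c n :=
      Finset.sum_le_sum_of_subset_of_nonneg
        (Finset.range_subset_range.mpr (by omega)) (fun n _ _ => hc n)
    nlinarith
  have key : Δt * ∑ n ∈ Finset.range l, d n * a n ≤
      (Δt * ∑ n ∈ Finset.range (l+1), c n + H) * ∑ n ∈ Finset.range l, (Δt * d n) *
        Real.exp (Δt * ∑ k ∈ Finset.range n, d k) := by
    rw [Finset.mul_sum, Finset.mul_sum]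
    apply Finset.sum_le_sum
    intro n hn
    have hnl : n < l := Finset.mem_range.mp hn
    have han : a n ≤ Real.exp (Δt * ∑ k ∈ Finset.range n, d k) *
        (Δt * ∑ m ∈ Finset.range (n+1), c m + H) := by
      have := ih n hnl
      have hbnn : 0 ≤ Δt * ∑ m ∈ Finset.range (n+1), b m := by
        have : 0 ≤ ∑ m ∈ Finset.range (n+1), b m := Finset.sum_nonneg fun m _ => hb m
        positivity
      linarith
    have han' : a n ≤ Real.exp (Δt * ∑ k ∈ Finset.range n, d k) *
        (Δt * ∑ m ∈ Finset.range (l+1), c m + H) :=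
      han.trans (mul_le_mul_of_nonneg_left (hCmono n hnl.le) (Real.exp_pos _).le)
    have h2 := mul_le_mul_of_nonneg_left han' (mul_nonneg hΔt.le (hd n))
    nlinarith
  have haux := gronwall_aux (fun n => Δt * d n) (fun n => mul_nonneg hΔt.le (hd n)) l
  have haux' : 1 + ∑ n ∈ Finset.range l, (Δt * d n) *
      Real.exp (Δt * ∑ k ∈ Finset.range n, d k) ≤
      Real.exp (Δt * ∑ n ∈ Finset.range l, d n) := by
    have hms : ∀ m : ℕ, (∑ k ∈ Finset.range m, Δt * d k) = Δt * ∑ k ∈ Finset.range m, d k :=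
      fun m => (Finset.mul_sum _ _ _).symm
    simp only [hms] at haux
    exact haux
  calc a l + Δt * ∑ n ∈ Finset.range (l+1), b n
      ≤ Δt * ∑ n ∈ Finset.range l, d n * a n +
        (Δt * ∑ n ∈ Finset.range (l+1), c n + H) := by linarith [hyp l]
    _ ≤ (Δt * ∑ n ∈ Finset.range (l+1), c n + H) * (1 + ∑ n ∈ Finset.range l, (Δt * d n) *
        Real.exp (Δt * ∑ k ∈ Finset.range n, d k)) := by nlinarith
    _ ≤ (Δt * ∑ n ∈ Finset.range (l+1), c n + H) *
        Real.exp (Δt * ∑ n ∈ Finset.range l, d n) :=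
        mul_le_mul_of_nonneg_left haux' (hCnn l)
    _ = _ := by rw [mul_comm]

end DiscreteGronwallPaper
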